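/- Let d ≥ 1, α ∈ (0,2), β > 0, C₀ > 0 and κ₁ > 0. Let U : ℝ^d → ℝ satisfy U(x) ≥ (d+β) log|x| − C₀ for all |x| ≥ 1, and assume that ⟨x, B(x)⟩ ≤ −κ₁ |x|^{2−d−α} for all |x| > 1. Define b(x) := B(x) e^{U(x)}. Then for every q > 0 and every x ∈ ℝ^d with |x| ≥ max((2q/κ₁)^{1/α}, 1): ⟨x, b(x)⟩ + q ρ_α(x) e^{U(x)} |x|^{2−α} ≤ −(κ₁/(2 e^{C₀})) |x|^{2+β−α}. -/

import Mathlib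

open MeasureTheory Real

noncomputable section

/-- `ρ_α(x) = (1+|x|²)^{-(d+α)/2}`. -/
def rhoA (d : ℕ) (α : ℝ) (x : EuclideanSpace ℝ (Fin d)) : ℝ :=
  (1 + ‖x‖ ^ 2) ^ (-(((d : ℝ) + α) / 2))

/-- `c_{d,α} = 2^α Γ((d+α)/2) / (Γ(d/2) Γ((2-α)/2))`. -/
def cdA (d : ℕ) (α : ℝ) : ℝ :=
  2 ^ α * Real.Gamma (((d : ℝ) + α) / 2)
    / (Real.Gamma ((d : ℝ) / 2) * Real.Gamma ((2 - α) / 2))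

/-- `B(x) = c_{d,α} ∫ y (ρ_α(x+y) - ρ_α(x-y)) |y|^{-d-α} dy`. -/
def fieldB (d : ℕ) (α : ℝ) (x : EuclideanSpace ℝ (Fin d)) : EuclideanSpace ℝ (Fin d) :=
  cdA d α • ∫ y : EuclideanSpace ℝ (Fin d),
    ((rhoA d α (x + y) - rhoA d α (x - y)) * ‖y‖ ^ (-(d : ℝ) - α)) • y


open scoped RealInnerProductSpace
open Metric Filter Topology


lemma rpow_norm_measurable (d : ℕ) (p : ℝ) :
    Measurable (fun y : EuclideanSpace ℝ (Fin d) => ‖y‖ ^ p) :=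
  measurable_norm.pow_const p

lemma integrableOn_rpow_norm_ball' (d : ℕ) (hd : 1 ≤ d) {p : ℝ} (hp : -(d : ℝ) < p) (R : ℝ) :
    IntegrableOn (fun y : EuclideanSpace ℝ (Fin d) => ‖y‖ ^ p) (ball 0 R) := by
  rcases le_or_gt R 0 with hR | hR
  · rw [ball_eq_empty.2 hR]; exact integrableOn_empty
  have : Nontrivial (EuclideanSpace ℝ (Fin d)) := by
    refine nontrivial_of_ne (EuclideanSpace.single ⟨0, hd⟩ 1) 0 ?_
    intro h
    have := congrArg (fun v : EuclideanSpace ℝ (Fin d) => v ⟨0, hd⟩) h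
    simp [EuclideanSpace.single_apply] at this
  rcases le_or_gt 0 p with hp0 | hp0
  · -- bounded case
    refine Measure.integrableOn_of_bounded measure_ball_lt_top.ne
      (rpow_norm_measurable d p).aestronglyMeasurable (M := R ^ p) ?_
    filter_upwards [ae_restrict_mem measurableSet_ball] with y hy
    rw [Real.norm_eq_abs, abs_of_nonneg (Real.rpow_nonneg (norm_nonneg y) p)]
    exact Real.rpow_le_rpow (norm_nonneg y) (le_of_lt (mem_ball_zero_iff.1 hy)) hp0
  -- singular case
  constructor
  · exact (rpow_norm_measurable d p).aestronglyMeasurable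
  rw [hasFiniteIntegral_iff_norm]
  set E := EuclideanSpace ℝ (Fin d)
  set A : ℕ → Set E := fun k => ball (0 : E) (R / 2 ^ k) ∩ {y | R / 2 ^ (k + 1) ≤ ‖y‖ ∨ y = 0}
  have hmeas : ∀ k, MeasurableSet (A k) := by
    intro k
    exact measurableSet_ball.inter
      (((measurable_norm (α := E)) measurableSet_Ici).union (measurableSet_singleton 0))
  have hcover : ball (0 : E) R ⊆ ⋃ k, A k := by
    intro y hy
    rcases eq_or_ne y 0 with rfl | hy0
    · exact Set.mem_iUnion.2 ⟨0, by simpa [A] using hR⟩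
    · have hny : 0 < ‖y‖ := norm_pos_iff.2 hy0
      obtain ⟨n, hn⟩ : ∃ n : ℕ, R / ‖y‖ < 2 ^ n := pow_unbounded_of_one_lt _ one_lt_two
      have hex : ∃ k : ℕ, R / 2 ^ (k + 1) ≤ ‖y‖ := by
        refine ⟨n, ?_⟩
        rw [div_le_iff₀ (by positivity)]
        rw [div_lt_iff₀ hny] at hn
        calc R ≤ 2 ^ n * ‖y‖ := hn.le
          _ ≤ 2 ^ (n + 1) * ‖y‖ := by
              gcongr
              · norm_num
              · omega
          _ = ‖y‖ * 2 ^ (n + 1) := mul_comm _ _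
      classical
      set k := Nat.find hex with hk
      refine Set.mem_iUnion.2 ⟨k, ⟨?_, Or.inl (Nat.find_spec hex)⟩⟩
      rw [mem_ball_zero_iff]
      rcases Nat.eq_zero_or_pos k with h0 | hpos
      · rw [h0]; simpa using mem_ball_zero_iff.1 hy
      · obtain ⟨m, hm⟩ : ∃ m, k = m + 1 := ⟨k - 1, by omega⟩
        have hmin := Nat.find_min hex (m := m) (by omega)
        push_neg at hmin
        rw [hm]
        exact hmin
  set V := volume (ball (0 : E) 1) with hV
  have hVlt : V < ⊤ := measure_ball_lt_top
  set q : ℝ := 2 ^ (-(p + (d : ℝ))) with hq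
  have hq0 : 0 ≤ q := Real.rpow_nonneg (by norm_num) _
  have hq1 : q < 1 := by
    rw [hq]
    apply Real.rpow_lt_one_of_one_lt_of_neg one_lt_two
    have : (1 : ℝ) ≤ (d : ℝ) := by exact_mod_cast hd
    linarith
  set c : ℕ → ℝ := fun k => (R / 2 ^ (k + 1)) ^ p * (R / 2 ^ k) ^ (d : ℝ) with hc
  have hc0 : 0 ≤ c 0 := by
    apply mul_nonneg <;> exact Real.rpow_nonneg (by positivity) _
  have hck : ∀ k, c k = c 0 * q ^ k := by
    intro k
    induction k with
    | zero => simp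
    | succ n ih =>
      have key : ∀ a : ℝ, 0 ≤ a → ∀ e : ℝ, (a / 2) ^ e = a ^ e * 2 ^ (-e) := by
        intro a ha e
        rw [Real.div_rpow ha (by norm_num), Real.rpow_neg (by norm_num), div_eq_mul_inv]
      have e1 : (R / 2 ^ (n + 1 + 1) : ℝ) = (R / 2 ^ (n + 1)) / 2 := by
        rw [pow_succ]; ring
      have e2 : (R / 2 ^ (n + 1) : ℝ) = (R / 2 ^ n) / 2 := by
        rw [pow_succ]; ring
      have hqsplit : (2 : ℝ) ^ (-p) * 2 ^ (-(d : ℝ)) = q := by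
        rw [hq, ← Real.rpow_add (by norm_num : (0:ℝ) < 2)]
        ring_nf
      calc c (n + 1) = ((R / 2 ^ (n + 1)) / 2) ^ p * ((R / 2 ^ n) / 2) ^ (d : ℝ) := by
            rw [hc]; dsimp only; rw [e1, e2]
        _ = c n * (2 ^ (-p) * 2 ^ (-(d : ℝ))) := by
            rw [key _ (by positivity) p, key _ (by positivity) (d : ℝ), hc]; ring
        _ = c 0 * q ^ (n + 1) := by rw [hqsplit, ih, pow_succ]; ring
  have hterm : ∀ k, ∫⁻ y in A k, ENNReal.ofReal ‖‖y‖ ^ p‖ ≤ ENNReal.ofReal (c k) * V := by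
    intro k
    have hpt : ∀ y ∈ A k, ENNReal.ofReal ‖‖y‖ ^ p‖ ≤ ENNReal.ofReal ((R / 2 ^ (k + 1)) ^ p) := by
      intro y hy
      rcases hy.2 with h | rfl
      · apply ENNReal.ofReal_le_ofReal
        rw [Real.norm_eq_abs, abs_of_nonneg (Real.rpow_nonneg (norm_nonneg _) _)]
        exact Real.rpow_le_rpow_of_nonpos (by positivity) h hp0.le
      · simp [Real.zero_rpow hp0.ne]
    calc ∫⁻ y in A k, ENNReal.ofReal ‖‖y‖ ^ p‖
        ≤ ∫⁻ _ in A k, ENNReal.ofReal ((R / 2 ^ (k + 1)) ^ p) :=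
          setLIntegral_mono' (hmeas k) hpt
      _ = ENNReal.ofReal ((R / 2 ^ (k + 1)) ^ p) * volume (A k) := setLIntegral_const _ _
      _ ≤ ENNReal.ofReal ((R / 2 ^ (k + 1)) ^ p) * volume (ball (0 : E) (R / 2 ^ k)) := by
          exact mul_le_mul_right (measure_mono Set.inter_subset_left) _
      _ = ENNReal.ofReal (c k) * V := by
          rw [Measure.addHaar_ball volume 0 (by positivity : (0:ℝ) ≤ R / 2 ^ k),
            show Module.finrank ℝ E = d from finrank_euclideanSpace_fin,
            ← Real.rpow_natCast (R / 2 ^ k) d, ← mul_assoc,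
            ← ENNReal.ofReal_mul (Real.rpow_nonneg (by positivity) _)]
  calc ∫⁻ y in ball (0 : E) R, ENNReal.ofReal ‖‖y‖ ^ p‖
      ≤ ∫⁻ y in ⋃ k, A k, ENNReal.ofReal ‖‖y‖ ^ p‖ := lintegral_mono_set hcover
    _ ≤ ∑' k, ∫⁻ y in A k, ENNReal.ofReal ‖‖y‖ ^ p‖ := lintegral_iUnion_le _ _
    _ ≤ ∑' k, ENNReal.ofReal (c k) * V := ENNReal.tsum_le_tsum hterm
    _ = ENNReal.ofReal (c 0) * ((1 - ENNReal.ofReal q)⁻¹ * V) := by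
        rw [tsum_congr (fun k => by
          rw [hck k, ENNReal.ofReal_mul hc0, ENNReal.ofReal_pow hq0, mul_assoc])]
        rw [ENNReal.tsum_mul_left, ENNReal.tsum_mul_right, ENNReal.tsum_geometric]
    _ < ⊤ := by
        apply ENNReal.mul_lt_top ENNReal.ofReal_lt_top
        apply ENNReal.mul_lt_top _ hVlt
        exact ENNReal.inv_lt_top.2 (tsub_pos_iff_lt.2 (ENNReal.ofReal_lt_one.2 hq1))

lemma rpow_neg_lipschitz {s : ℝ} (hs : 0 ≤ s) {u v : ℝ} (hu : 1 ≤ u) (hv : 1 ≤ v) :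
    |u ^ (-s) - v ^ (-s)| ≤ s * |u - v| := by
  have hder : ∀ t ∈ Set.Ici (1 : ℝ),
      HasDerivWithinAt (fun t : ℝ => t ^ (-s)) (-s * t ^ (-s - 1)) (Set.Ici 1) t := by
    intro t ht
    exact (Real.hasDerivAt_rpow_const (Or.inl (by linarith [ht.out] : t ≠ 0))).hasDerivWithinAt
  have hbound : ∀ t ∈ Set.Ici (1 : ℝ), ‖-s * t ^ (-s - 1)‖ ≤ s := by
    intro t ht
    rw [norm_mul, norm_neg, Real.norm_eq_abs, Real.norm_eq_abs, abs_of_nonneg hs,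
      abs_of_nonneg (Real.rpow_nonneg (by linarith [ht.out]) _)]
    calc s * t ^ (-s - 1) ≤ s * 1 := by
          gcongr
          exact Real.rpow_le_one_of_one_le_of_nonpos ht.out (by linarith)
      _ = s := mul_one s
  have h := Convex.norm_image_sub_le_of_norm_hasDerivWithin_le hder hbound
    (convex_Ici 1) (Set.mem_Ici.2 hv) (Set.mem_Ici.2 hu)
  simpa [Real.norm_eq_abs] using h



lemma rhoA_nonneg (d : ℕ) (α : ℝ) (x : EuclideanSpace ℝ (Fin d)) : 0 ≤ rhoA d α x :=
  Real.rpow_nonneg (by positivity) _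

lemma rhoA_le_one (d : ℕ) {α : ℝ} (hα : 0 ≤ α) (x : EuclideanSpace ℝ (Fin d)) :
    rhoA d α x ≤ 1 := by
  apply Real.rpow_le_one_of_one_le_of_nonpos (by nlinarith [sq_nonneg ‖x‖])
  have : (0:ℝ) ≤ (d:ℝ) := Nat.cast_nonneg d
  rw [neg_nonpos]
  positivity

lemma rhoA_continuous (d : ℕ) (α : ℝ) : Continuous (rhoA d α) := by
  apply Continuous.rpow_const
  · continuity
  · intro x
    left
    nlinarith [sq_nonneg ‖x‖]

lemma rhoA_le_rpow (d : ℕ) {α : ℝ} (hα : 0 ≤ α) {z : EuclideanSpace ℝ (Fin d)}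
    (hz : z ≠ 0) : rhoA d α z ≤ ‖z‖ ^ (-((d : ℝ) + α)) := by
  have hz' : 0 < ‖z‖ := norm_pos_iff.2 hz
  have h1 : rhoA d α z ≤ (‖z‖ ^ 2) ^ (-(((d : ℝ) + α) / 2)) := by
    apply Real.rpow_le_rpow_of_nonpos (by positivity) (by linarith [sq_nonneg ‖z‖])
    have : (0:ℝ) ≤ (d:ℝ) := Nat.cast_nonneg d
    rw [neg_nonpos]; positivity
  calc rhoA d α z ≤ (‖z‖ ^ 2) ^ (-(((d : ℝ) + α) / 2)) := h1
    _ = ‖z‖ ^ (-((d : ℝ) + α)) := by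
        rw [← Real.rpow_natCast ‖z‖ 2, ← Real.rpow_mul (norm_nonneg z)]
        norm_num
        ring_nf

lemma rhoA_diff_bound (d : ℕ) {α : ℝ} (hα : 0 ≤ α) (x y : EuclideanSpace ℝ (Fin d)) :
    |rhoA d α (x + y) - rhoA d α (x - y)| ≤ (2 * ((d : ℝ) + α)) * (‖x‖ * ‖y‖) := by
  have hd0 : (0:ℝ) ≤ (d:ℝ) := Nat.cast_nonneg d
  have hs : 0 ≤ ((d : ℝ) + α) / 2 := by positivity
  have h := rpow_neg_lipschitz hs (u := 1 + ‖x + y‖ ^ 2) (v := 1 + ‖x - y‖ ^ 2)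
    (by nlinarith [sq_nonneg ‖x+y‖]) (by nlinarith [sq_nonneg ‖x-y‖])
  have hdiff : (1 + ‖x + y‖ ^ 2) - (1 + ‖x - y‖ ^ 2) = 4 * ⟪x, y⟫ := by
    rw [norm_add_sq_real, norm_sub_sq_real]; ring
  have hcs : |⟪x, y⟫| ≤ ‖x‖ * ‖y‖ := abs_real_inner_le_norm x y
  calc |rhoA d α (x + y) - rhoA d α (x - y)| ≤ ((d : ℝ) + α) / 2 * |(1 + ‖x + y‖ ^ 2) - (1 + ‖x - y‖ ^ 2)| := h
    _ = ((d : ℝ) + α) / 2 * (4 * |⟪x, y⟫|) := by rw [hdiff, abs_mul]; norm_num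
    _ ≤ ((d : ℝ) + α) / 2 * (4 * (‖x‖ * ‖y‖)) := by gcongr
    _ = (2 * ((d : ℝ) + α)) * (‖x‖ * ‖y‖) := by ring

section FF
variable (d : ℕ) (α : ℝ)

/-- integrand of `fieldB` -/
def FF (x y : EuclideanSpace ℝ (Fin d)) : EuclideanSpace ℝ (Fin d) :=
  ((rhoA d α (x + y) - rhoA d α (x - y)) * ‖y‖ ^ (-(d : ℝ) - α)) • y

lemma FF_aestronglyMeasurable (x : EuclideanSpace ℝ (Fin d)) :
    AEStronglyMeasurable (FF d α x) volume := by
  have m1 : Measurable fun y : EuclideanSpace ℝ (Fin d) => rhoA d α (x + y) :=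
    (rhoA_continuous d α).measurable.comp (measurable_const.add measurable_id)
  have m2 : Measurable fun y : EuclideanSpace ℝ (Fin d) => rhoA d α (x - y) :=
    (rhoA_continuous d α).measurable.comp (measurable_const.sub measurable_id)
  exact (((m1.sub m2).mul (measurable_norm.pow_const _)).smul measurable_id).aestronglyMeasurable

/-- dominating function -/
def GG (y : EuclideanSpace ℝ (Fin d)) : ℝ :=
  if ‖y‖ < 6 then (4 * ((d : ℝ) + α)) * ‖y‖ ^ (2 - (d : ℝ) - α)
  else (2 * (3 / 2 : ℝ) ^ ((d : ℝ) + α) * 2 ^ ((d : ℝ) + α)) * (1 + ‖y‖) ^ (-((d : ℝ) + α))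

lemma GG_integrable (hd : 1 ≤ d) (hα : 0 < α) (hα2 : α < 2) :
    Integrable (GG d α) := by
  have hd1 : (1 : ℝ) ≤ (d : ℝ) := by exact_mod_cast hd
  have h1 : IntegrableOn (GG d α) (ball (0 : EuclideanSpace ℝ (Fin d)) 6) := by
    refine MeasureTheory.IntegrableOn.congr_fun
      ((integrableOn_rpow_norm_ball' d hd (p := 2 - (d : ℝ) - α) (by linarith) 6).const_mul
      (4 * ((d : ℝ) + α))) ?_ measurableSet_ball
    intro y hy
    rw [GG, if_pos (mem_ball_zero_iff.1 hy)]
  have h2 : IntegrableOn (GG d α) (ball (0 : EuclideanSpace ℝ (Fin d)) 6)ᶜ := by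
    have hint : Integrable fun y : EuclideanSpace ℝ (Fin d) => (1 + ‖y‖) ^ (-((d : ℝ) + α)) := by
      apply integrable_one_add_norm
      rw [finrank_euclideanSpace_fin]
      linarith
    refine MeasureTheory.IntegrableOn.congr_fun
      ((hint.const_mul (2 * (3 / 2 : ℝ) ^ ((d : ℝ) + α) * 2 ^ ((d : ℝ) + α))).integrableOn)
      ?_ measurableSet_ball.compl
    intro y hy
    rw [GG, if_neg (by simpa [mem_ball_zero_iff] using hy)]
  have := h1.union h2
  rwa [Set.union_compl_self, integrableOn_univ] at this

lemma FF_norm_bound (hd : 1 ≤ d) (hα : 0 < α) (hα2 : α < 2)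
    {x : EuclideanSpace ℝ (Fin d)} (hx : ‖x‖ ≤ 2) (y : EuclideanSpace ℝ (Fin d)) :
    ‖FF d α x y‖ ≤ GG d α y := by
  have hd1 : (1 : ℝ) ≤ (d : ℝ) := by exact_mod_cast hd
  have hda : (0:ℝ) < (d : ℝ) + α := by linarith
  have hFn : ‖FF d α x y‖ = |rhoA d α (x + y) - rhoA d α (x - y)| * ‖y‖ ^ (-(d : ℝ) - α) * ‖y‖ := by
    rw [FF, norm_smul, Real.norm_eq_abs, abs_mul,
      abs_of_nonneg (Real.rpow_nonneg (norm_nonneg y) _)]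
  rw [GG]
  split_ifs with h6
  · -- small y
    rcases eq_or_ne y 0 with rfl | hy0
    · rw [hFn]
      simp only [norm_zero, mul_zero]
      positivity
    have hy : 0 < ‖y‖ := norm_pos_iff.2 hy0
    calc ‖FF d α x y‖ ≤ (2 * ((d : ℝ) + α)) * (‖x‖ * ‖y‖) * ‖y‖ ^ (-(d : ℝ) - α) * ‖y‖ := by
          rw [hFn]
          gcongr
          exact rhoA_diff_bound d hα.le x y
      _ ≤ (2 * ((d : ℝ) + α)) * (2 * ‖y‖) * ‖y‖ ^ (-(d : ℝ) - α) * ‖y‖ := by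
          gcongr
      _ = (4 * ((d : ℝ) + α)) * (‖y‖ ^ (1:ℝ) * ‖y‖ ^ (-(d : ℝ) - α) * ‖y‖ ^ (1:ℝ)) := by
          rw [Real.rpow_one]; ring
      _ = (4 * ((d : ℝ) + α)) * ‖y‖ ^ (2 - (d : ℝ) - α) := by
          rw [← Real.rpow_add hy, ← Real.rpow_add hy,
            show (1:ℝ) + (-(d:ℝ) - α) + 1 = 2 - (d:ℝ) - α by ring]
  · -- large y
    push_neg at h6
    have hy1 : (1:ℝ) ≤ ‖y‖ := by linarith
    have hy : 0 < ‖y‖ := by linarith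
    have hlow : ∀ z : EuclideanSpace ℝ (Fin d), (2/3 : ℝ) * ‖y‖ ≤ ‖z‖ →
        rhoA d α z ≤ (3/2 : ℝ) ^ ((d : ℝ) + α) * ‖y‖ ^ (-((d : ℝ) + α)) := by
      intro z hz
      have hz0 : z ≠ 0 := by
        intro h
        rw [h, norm_zero] at hz
        nlinarith
      calc rhoA d α z ≤ ‖z‖ ^ (-((d : ℝ) + α)) := rhoA_le_rpow d hα.le hz0
        _ ≤ ((2/3 : ℝ) * ‖y‖) ^ (-((d : ℝ) + α)) :=
            Real.rpow_le_rpow_of_nonpos (by nlinarith) hz (by linarith)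
        _ = (2/3 : ℝ) ^ (-((d : ℝ) + α)) * ‖y‖ ^ (-((d : ℝ) + α)) :=
            Real.mul_rpow (by norm_num) hy.le
        _ = (3/2 : ℝ) ^ ((d : ℝ) + α) * ‖y‖ ^ (-((d : ℝ) + α)) := by
            rw [show (3/2:ℝ) = (2/3:ℝ)⁻¹ by norm_num, Real.inv_rpow (by norm_num),
              ← Real.rpow_neg (by norm_num)]
    have hplus : (2/3 : ℝ) * ‖y‖ ≤ ‖x + y‖ := by
      have := norm_sub_norm_le y (-x)
      rw [sub_neg_eq_add, norm_neg, add_comm] at this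
      nlinarith
    have hminus : (2/3 : ℝ) * ‖y‖ ≤ ‖x - y‖ := by
      have := norm_sub_norm_le y x
      rw [← norm_sub_rev x y] at this
      nlinarith
    have habs : |rhoA d α (x + y) - rhoA d α (x - y)| ≤
        2 * ((3/2 : ℝ) ^ ((d : ℝ) + α) * ‖y‖ ^ (-((d : ℝ) + α))) := by
      have hM : (0:ℝ) ≤ (3/2 : ℝ) ^ ((d : ℝ) + α) * ‖y‖ ^ (-((d : ℝ) + α)) := by positivity
      rw [abs_sub_le_iff]
      constructor
      · have := hlow _ hplus
        have h2 := rhoA_nonneg d α (x - y)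
        linarith
      · have := hlow _ hminus
        have h2 := rhoA_nonneg d α (x + y)
        linarith
    have hA : ‖y‖ ^ (-((d : ℝ) + α)) * ‖y‖ = ‖y‖ ^ (1 - ((d : ℝ) + α)) := by
      nth_rewrite 2 [← Real.rpow_one ‖y‖]
      rw [← Real.rpow_add hy, show -((d:ℝ) + α) + 1 = 1 - ((d:ℝ) + α) by ring]
    have hkey : ‖y‖ ^ (-((d : ℝ) + α)) ≤ (2 : ℝ) ^ ((d : ℝ) + α) * (1 + ‖y‖) ^ (-((d : ℝ) + α)) := by
      have h2y : (1 + ‖y‖) ≤ 2 * ‖y‖ := by linarith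
      calc ‖y‖ ^ (-((d : ℝ) + α)) = (2:ℝ) ^ ((d : ℝ) + α) * ((2 * ‖y‖) ^ (-((d : ℝ) + α))) := by
            rw [Real.mul_rpow (by norm_num) hy.le, ← mul_assoc,
              ← Real.rpow_add (by norm_num : (0:ℝ) < 2),
              show (d:ℝ) + α + -((d:ℝ) + α) = 0 by ring, Real.rpow_zero, one_mul]
        _ ≤ (2:ℝ) ^ ((d : ℝ) + α) * (1 + ‖y‖) ^ (-((d : ℝ) + α)) := by
            have := Real.rpow_le_rpow_of_nonpos (by positivity : (0:ℝ) < 1 + ‖y‖) h2y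
              (by linarith : -((d:ℝ) + α) ≤ 0)
            have h2p : (0:ℝ) ≤ (2:ℝ) ^ ((d : ℝ) + α) := by positivity
            exact mul_le_mul_of_nonneg_left this h2p
    calc ‖FF d α x y‖ ≤ (2 * ((3/2 : ℝ) ^ ((d : ℝ) + α) * ‖y‖ ^ (-((d : ℝ) + α)))) *
          ‖y‖ ^ (-(d : ℝ) - α) * ‖y‖ := by
          rw [hFn]
          gcongr
      _ = (2 * (3/2 : ℝ) ^ ((d : ℝ) + α)) * ‖y‖ ^ (-((d : ℝ) + α)) *
          (‖y‖ ^ (-((d : ℝ) + α)) * ‖y‖) := by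
          rw [show -(d : ℝ) - α = -((d : ℝ) + α) by ring]
          ring
      _ = (2 * (3/2 : ℝ) ^ ((d : ℝ) + α)) * ‖y‖ ^ (-((d : ℝ) + α)) *
          ‖y‖ ^ (1 - ((d : ℝ) + α)) := by rw [hA]
      _ ≤ (2 * (3/2 : ℝ) ^ ((d : ℝ) + α)) * ‖y‖ ^ (-((d : ℝ) + α)) * 1 := by
          have h1 : ‖y‖ ^ (1 - ((d:ℝ) + α)) ≤ 1 :=
            Real.rpow_le_one_of_one_le_of_nonpos hy1 (by linarith)
          have h0 : (0:ℝ) ≤ (2 * (3/2 : ℝ) ^ ((d : ℝ) + α)) * ‖y‖ ^ (-((d : ℝ) + α)) := by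
            positivity
          exact mul_le_mul_of_nonneg_left h1 h0
      _ = (2 * (3/2 : ℝ) ^ ((d : ℝ) + α)) * ‖y‖ ^ (-((d : ℝ) + α)) := mul_one _
      _ ≤ (2 * (3/2 : ℝ) ^ ((d : ℝ) + α)) * ((2 : ℝ) ^ ((d : ℝ) + α) * (1 + ‖y‖) ^ (-((d : ℝ) + α))) := by
          have h0 : (0:ℝ) ≤ 2 * (3/2 : ℝ) ^ ((d : ℝ) + α) := by positivity
          exact mul_le_mul_of_nonneg_left hkey h0
      _ = 2 * (3 / 2 : ℝ) ^ ((d : ℝ) + α) * 2 ^ ((d : ℝ) + α) * (1 + ‖y‖) ^ (-((d : ℝ) + α)) := by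
          ring

end FF


lemma fieldB_eq (d : ℕ) (α : ℝ) (x : EuclideanSpace ℝ (Fin d)) :
    fieldB d α x = cdA d α • ∫ y, FF d α x y := rfl

lemma inner_fieldB_ext (d : ℕ) (hd : 1 ≤ d) {α κ₁ : ℝ} (hα : 0 < α) (hα2 : α < 2)
    (hB : ∀ x : EuclideanSpace ℝ (Fin d), 1 < ‖x‖ →
      ⟪x, fieldB d α x⟫ ≤ -κ₁ * ‖x‖ ^ (2 - (d : ℝ) - α))
    (x : EuclideanSpace ℝ (Fin d)) (hx : 1 ≤ ‖x‖) :
    ⟪x, fieldB d α x⟫ ≤ -κ₁ * ‖x‖ ^ (2 - (d : ℝ) - α) := by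
  rcases lt_or_eq_of_le hx with h1 | h1
  · exact hB x h1
  set c : ℕ → ℝ := fun n => 1 + 1 / (n + 1) with hc
  have hcpos : ∀ n, 0 < c n := fun n => by positivity
  have hnormxn : ∀ n, ‖c n • x‖ = c n := by
    intro n
    rw [norm_smul, Real.norm_eq_abs, abs_of_pos (hcpos n), ← h1, mul_one]
  have hgt : ∀ n, 1 < ‖c n • x‖ := by
    intro n
    rw [hnormxn n, hc]
    have : (0:ℝ) < 1 / ((n:ℝ) + 1) := by positivity
    linarith
  have hle2 : ∀ n, ‖c n • x‖ ≤ 2 := by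
    intro n
    rw [hnormxn n, hc]
    have h1n : 1 / ((n:ℝ) + 1) ≤ 1 := by
      rw [div_le_one (by positivity)]
      linarith [Nat.cast_nonneg (α := ℝ) n]
    linarith
  have hc_tend : Filter.Tendsto c Filter.atTop (𝓝 1) := by
    rw [hc]
    have h0 := tendsto_one_div_add_atTop_nhds_zero_nat (𝕜 := ℝ)
    have h1' := Filter.Tendsto.const_add (1:ℝ) h0
    simpa using h1'
  have hxn_tend : Filter.Tendsto (fun n => c n • x) Filter.atTop (𝓝 x) := by
    have := hc_tend.smul_const x
    simpa using this
  have hlim : ∀ y, Filter.Tendsto (fun n => FF d α (c n • x) y) Filter.atTop (𝓝 (FF d α x y)) := by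
    intro y
    have hadd : Filter.Tendsto (fun n => c n • x + y) Filter.atTop (𝓝 (x + y)) :=
      hxn_tend.add tendsto_const_nhds
    have hsub : Filter.Tendsto (fun n => c n • x - y) Filter.atTop (𝓝 (x - y)) :=
      hxn_tend.sub tendsto_const_nhds
    have hr1 := ((rhoA_continuous d α).tendsto (x + y)).comp hadd
    have hr2 := ((rhoA_continuous d α).tendsto (x - y)).comp hsub
    exact ((hr1.sub hr2).mul_const _).smul_const y
  have hI_tend : Filter.Tendsto (fun n => ∫ y, FF d α (c n • x) y) Filter.atTop
      (𝓝 (∫ y, FF d α x y)) := by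
    apply MeasureTheory.tendsto_integral_of_dominated_convergence (GG d α)
      (fun n => FF_aestronglyMeasurable d α _) (GG_integrable d α hd hα hα2)
    · exact fun n => Filter.Eventually.of_forall (FF_norm_bound d α hd hα hα2 (hle2 n))
    · exact Filter.Eventually.of_forall hlim
  have hfB : Filter.Tendsto (fun n => fieldB d α (c n • x)) Filter.atTop (𝓝 (fieldB d α x)) := by
    simp only [fieldB_eq]
    exact hI_tend.const_smul (cdA d α)
  have hinner : Filter.Tendsto (fun n => ⟪c n • x, fieldB d α (c n • x)⟫) Filter.atTop
      (𝓝 ⟪x, fieldB d α x⟫) := hxn_tend.inner hfB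
  have hrhs : Filter.Tendsto (fun n => -κ₁ * ‖c n • x‖ ^ (2 - (d : ℝ) - α)) Filter.atTop
      (𝓝 (-κ₁ * ‖x‖ ^ (2 - (d : ℝ) - α))) := by
    have hnorm_t : Filter.Tendsto (fun n => ‖c n • x‖) Filter.atTop (𝓝 ‖x‖) := hxn_tend.norm
    have hcont := (Real.continuousAt_rpow_const ‖x‖ (2 - (d : ℝ) - α)
      (Or.inl (by rw [← h1]; norm_num))).tendsto.comp hnorm_t
    exact hcont.const_mul (-κ₁)
  exact le_of_tendsto_of_tendsto' hinner hrhs (fun n => hB _ (hgt n))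

/-- Under the heavy-tail condition `U(x) ≥ (d+β)log|x| - C₀` for
`|x| ≥ 1` and the drift bound `⟨x, B(x)⟩ ≤ -κ₁|x|^{2-d-α}` for `|x| > 1`, the coefficient
`b(x) = B(x)e^{U(x)}` satisfies, for every `q > 0` and `|x| ≥ max((2q/κ₁)^{1/α}, 1)`:
`⟨x, b(x)⟩ + q ρ_α(x) e^{U(x)} |x|^{2-α} ≤ -(κ₁/(2e^{C₀})) |x|^{2+β-α}`. -/
theorem stmt_18 (d : ℕ) (hd : 1 ≤ d) (α β C₀ κ₁ : ℝ)
    (hα : α ∈ Set.Ioo (0 : ℝ) 2) (hβ : 0 < β) (hC₀ : 0 < C₀) (hκ₁ : 0 < κ₁)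
    (U : EuclideanSpace ℝ (Fin d) → ℝ)
    (hU : ∀ x : EuclideanSpace ℝ (Fin d), 1 ≤ ‖x‖ →
      ((d : ℝ) + β) * Real.log ‖x‖ - C₀ ≤ U x)
    (hB : ∀ x : EuclideanSpace ℝ (Fin d), 1 < ‖x‖ →
      ⟪x, fieldB d α x⟫ ≤ -κ₁ * ‖x‖ ^ (2 - (d : ℝ) - α)) :
    ∀ q : ℝ, 0 < q → ∀ x : EuclideanSpace ℝ (Fin d),
      max ((2 * q / κ₁) ^ (1 / α)) 1 ≤ ‖x‖ →
      ⟪x, Real.exp (U x) • fieldB d α x⟫ + q * rhoA d α x * Real.exp (U x) * ‖x‖ ^ (2 - α)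
        ≤ -(κ₁ / (2 * Real.exp C₀)) * ‖x‖ ^ (2 + β - α) := by
  obtain ⟨hα1, hα2⟩ := hα
  intro q hq x hx
  have hx1 : 1 ≤ ‖x‖ := le_trans (le_max_right _ _) hx
  have hr : 0 < ‖x‖ := lt_of_lt_of_le one_pos hx1
  set r := ‖x‖ with hrdef
  have hx0 : x ≠ 0 := norm_pos_iff.1 hr
  have he : 0 < Real.exp (U x) := Real.exp_pos _
  set e := Real.exp (U x) with hedef
  have h_inner : ⟪x, fieldB d α x⟫ ≤ -κ₁ * r ^ (2 - (d : ℝ) - α) :=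
    inner_fieldB_ext d hd hα1 hα2 hB x hx1
  have hrho : rhoA d α x ≤ r ^ (-((d : ℝ) + α)) := rhoA_le_rpow d hα1.le hx0
  have hs2 : 0 < r ^ (2 - (d : ℝ) - α) := Real.rpow_pos_of_pos hr _
  -- q * r^(-α) ≤ κ₁ / 2
  have hqα : q * r ^ (-α) ≤ κ₁ / 2 := by
    have hb : (0:ℝ) < 2 * q / κ₁ := by positivity
    have h1 : 2 * q / κ₁ ≤ r ^ α := by
      have h2 := Real.rpow_le_rpow (Real.rpow_nonneg hb.le _)
        (le_trans (le_max_left _ _) hx) hα1.le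
      rwa [← Real.rpow_mul hb.le, one_div, inv_mul_cancel₀ hα1.ne', Real.rpow_one] at h2
    have hq2 : q ≤ κ₁ / 2 * r ^ α := by
      rw [div_le_iff₀ hκ₁] at h1
      nlinarith
    have hrα : 0 < r ^ α := Real.rpow_pos_of_pos hr α
    calc q * r ^ (-α) ≤ κ₁ / 2 * r ^ α * r ^ (-α) := by
          have h3 : (0:ℝ) ≤ r ^ (-α) := (Real.rpow_pos_of_pos hr _).le
          exact mul_le_mul_of_nonneg_right hq2 h3
      _ = κ₁ / 2 := by
          rw [mul_assoc, ← Real.rpow_add hr, add_neg_cancel, Real.rpow_zero, mul_one]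
  -- e ≥ r^(d+β) * exp(-C₀)
  have hU' : r ^ ((d : ℝ) + β) * Real.exp (-C₀) ≤ e := by
    calc r ^ ((d : ℝ) + β) * Real.exp (-C₀)
        = Real.exp (((d : ℝ) + β) * Real.log r - C₀) := by
          rw [Real.exp_sub, Real.rpow_def_of_pos hr, mul_comm (Real.log r), Real.exp_neg,
            div_eq_mul_inv]
      _ ≤ e := Real.exp_le_exp.2 (hU x hx1)
  have hpow : r ^ (-((d:ℝ) + α)) * r ^ (2 - α) = r ^ (2 - (d:ℝ) - α) * r ^ (-α) := by
    rw [← Real.rpow_add hr, ← Real.rpow_add hr]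
    congr 1
    ring
  have hpow2 : r ^ ((d:ℝ) + β) * r ^ (2 - (d:ℝ) - α) = r ^ (2 + β - α) := by
    rw [← Real.rpow_add hr]
    congr 1
    ring
  have hrnn : (0:ℝ) ≤ r ^ (2 - α) := (Real.rpow_pos_of_pos hr _).le
  calc ⟪x, e • fieldB d α x⟫ + q * rhoA d α x * e * r ^ (2 - α)
      = e * ⟪x, fieldB d α x⟫ + q * rhoA d α x * e * r ^ (2 - α) := by
        rw [real_inner_smul_right]
    _ ≤ e * (-κ₁ * r ^ (2 - (d:ℝ) - α)) + q * (r ^ (-((d:ℝ) + α))) * e * r ^ (2 - α) := by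
        gcongr
    _ = e * (-κ₁ * r ^ (2 - (d:ℝ) - α)) + e * r ^ (2 - (d:ℝ) - α) * (q * r ^ (-α)) := by
        linear_combination (q * e) * hpow
    _ ≤ e * (-κ₁ * r ^ (2 - (d:ℝ) - α)) + e * r ^ (2 - (d:ℝ) - α) * (κ₁ / 2) := by
        gcongr
    _ = -(κ₁ / 2) * (e * r ^ (2 - (d:ℝ) - α)) := by ring
    _ ≤ -(κ₁ / 2) * ((r ^ ((d:ℝ) + β) * Real.exp (-C₀)) * r ^ (2 - (d:ℝ) - α)) := by
        apply mul_le_mul_of_nonpos_left _ (by linarith : -(κ₁ / 2) ≤ 0)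
        exact mul_le_mul_of_nonneg_right hU' hs2.le
    _ = -(κ₁ / (2 * Real.exp C₀)) * r ^ (2 + β - α) := by
        rw [← hpow2, Real.exp_neg]
        field_simp
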